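/- Let G be a connected graph on n vertices with principal eigenvector x normalized so that ∑_{i=1}^n x_i² = 1, let ρ be the spectral radius of the adjacency matrix of G, and let d_i denote the degree of vertex i. For a vertex i, equality x_i = 1/√(1 + ρ²/d_i) holds if and only if x_i is the largest entry of x, d_i = n-1, and the subgraph G_(i) obtained from G by deleting vertex i (and all edges incident on it) is regular. -/

import Mathlib

open Matrix

/-- The spectral radius of a real square matrix: the supremum of the absolute values of
its (real) eigenvalues. -/
noncomputable def specRad {V : Type*} [Fintype V] [DecidableEq V] (A : Matrix V V ℝ) : ℝ :=
  sSup {r : ℝ | ∃ μ : ℝ, Module.End.HasEigenvalue (Matrix.toLin' A) μ ∧ r = |μ|}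

lemma sumsq_eq {α : Type*} (s : Finset α) (x : α → ℝ)
    (h : (∑ k ∈ s, x k)^2 = s.card * ∑ k ∈ s, x k^2) :
    ∀ j ∈ s, ∀ k ∈ s, x j = x k := by
  have key : ∑ j ∈ s, ∑ k ∈ s, (x j - x k)^2 = 0 := by
    have e1 : ∀ j, ∑ k ∈ s, (x j - x k)^2
        = s.card * x j^2 - 2*x j*(∑ k ∈ s, x k) + ∑ k ∈ s, x k^2 := by
      intro j
      calc ∑ k ∈ s, (x j - x k)^2 = ∑ k ∈ s, (x j^2 - 2*x j*x k + x k^2) := by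
            apply Finset.sum_congr rfl; intros; ring
        _ = (∑ _k ∈ s, x j^2) - (∑ k ∈ s, 2*x j*x k) + ∑ k ∈ s, x k^2 := by
            rw [Finset.sum_add_distrib, Finset.sum_sub_distrib]
        _ = _ := by rw [Finset.sum_const, nsmul_eq_mul, ← Finset.mul_sum]
    rw [Finset.sum_congr rfl (fun j _ => e1 j)]
    rw [Finset.sum_add_distrib, Finset.sum_sub_distrib, Finset.sum_const, nsmul_eq_mul,
      ← Finset.sum_mul, ← Finset.mul_sum]
    rw [show (∑ i ∈ s, 2 * x i) = 2 * ∑ i ∈ s, x i from by rw [← Finset.mul_sum]]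
    nlinarith [h]
  intro j hj k hk
  have h1 := (Finset.sum_eq_zero_iff_of_nonneg (fun j _ => Finset.sum_nonneg
    (fun k _ => sq_nonneg (x j - x k)))).mp key j hj
  have h2 := (Finset.sum_eq_zero_iff_of_nonneg (fun k _ => sq_nonneg (x j - x k))).mp h1 k hk
  have := sq_eq_zero_iff.mp h2
  linarith

lemma bridge {n : ℕ} (G : SimpleGraph (Fin n)) [DecidableRel G.Adj] (i : Fin n)
    (v : ({i}ᶜ : Set (Fin n))) :
    (G.induce ({i}ᶜ : Set (Fin n))).degree v = ((G.neighborFinset (v:Fin n)).erase i).card := by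
  rw [SimpleGraph.degree]
  apply Finset.card_bij (fun (u : ({i}ᶜ : Set (Fin n))) _ => (u : Fin n))
  · intro a ha
    rw [SimpleGraph.mem_neighborFinset] at ha
    have : (a : Fin n) ≠ i := a.2
    simp only [Finset.mem_erase, SimpleGraph.mem_neighborFinset]
    exact ⟨this, ha⟩
  · intro a _ b _ hab; exact Subtype.ext hab
  · intro b hb
    rw [Finset.mem_erase, SimpleGraph.mem_neighborFinset] at hb
    refine ⟨⟨b, hb.1⟩, ?_, rfl⟩
    rw [SimpleGraph.mem_neighborFinset]
    exact hb.2

/-- **Cioabă–Gregory, equality case.** Let `G` be a connected graph on `n` vertices with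
principal eigenvector `x` (normalized so that `∑ x i ^ 2 = 1`), spectral radius `ρ`, and vertex
degrees `d i = G.degree i`. For a vertex `i`, equality `x i = 1 / √(1 + ρ² / d i)` holds if and
only if `x i` is the largest entry of `x`, `d i = n - 1`, and the subgraph `G_(i)` obtained by
deleting the vertex `i` is regular. -/
theorem stmt3 {n : ℕ} (G : SimpleGraph (Fin n)) [DecidableRel G.Adj]
    (hG : G.Connected) (x : Fin n → ℝ) (ρ : ℝ)
    (hρ : ρ = specRad (G.adjMatrix ℝ))
    (hx_pos : ∀ i, 0 < x i)
    (hx_norm : ∑ i, x i ^ 2 = 1)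
    (heig : G.adjMatrix ℝ *ᵥ x = ρ • x) :
    ∀ i, x i = 1 / Real.sqrt (1 + ρ ^ 2 / (G.degree i : ℝ)) ↔
      (∀ j, x j ≤ x i) ∧ G.degree i = n - 1 ∧
        ∃ d, (G.induce ({i}ᶜ : Set (Fin n))).IsRegularOfDegree d := by
  classical
  intro i
  have hEig : ∀ j, ∑ k ∈ G.neighborFinset j, x k = ρ * x j := by
    intro j
    have := congrFun heig j
    rw [SimpleGraph.adjMatrix_mulVec_apply] at this
    simpa using this
  rcases Nat.lt_or_ge n 2 with hn | hn
  · -- the case `n = 1`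
    have hn1 : n = 1 := by have := i.pos; omega
    subst hn1
    have hidef : ∀ j : Fin 1, j = i := fun j => Subsingleton.elim j i
    have hdeg0 : G.degree i = 0 := by
      rw [← SimpleGraph.card_neighborFinset_eq_degree]
      apply Finset.card_eq_zero.mpr
      rw [Finset.eq_empty_iff_forall_notMem]
      intro k hk
      rw [SimpleGraph.mem_neighborFinset] at hk
      exact G.irrefl (by rwa [hidef k] at hk)
    have hx1 : x i = 1 := by
      rw [Fin.sum_univ_one] at hx_norm
      have h0 : (0 : Fin 1) = i := hidef 0
      nlinarith [hx_pos i, hx_norm, h0 ▸ hx_norm]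
    constructor
    · intro _
      refine ⟨fun j => by rw [hidef j], by simp [hdeg0], 0, ?_⟩
      intro v
      exact absurd (Set.mem_singleton_iff.mpr (Subsingleton.elim _ _)) v.2
    · intro _
      rw [hdeg0, hx1]
      norm_num
  · -- main case `2 ≤ n`
    have hNe : ∀ j : Fin n, ∃ w, G.Adj j w := by
      intro v
      obtain ⟨w, hw⟩ := Fintype.exists_ne_of_one_lt_card (by rw [Fintype.card_fin]; omega) v
      obtain ⟨p⟩ := hG.preconnected v w
      cases p with
      | nil => exact absurd rfl hw
      | cons h _ => exact ⟨_, h⟩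
    have hdegpos : ∀ j, 0 < G.degree j := fun j =>
      (SimpleGraph.degree_pos_iff_exists_adj G j).mpr (hNe j)
    have hNne : ∀ j, (G.neighborFinset j).Nonempty := fun j =>
      Finset.card_pos.mp (by rw [SimpleGraph.card_neighborFinset_eq_degree]; exact hdegpos j)
    have hρpos : 0 < ρ := by
      have hpos : 0 < ∑ k ∈ G.neighborFinset i, x k :=
        Finset.sum_pos (fun k _ => hx_pos k) (hNne i)
      nlinarith [hEig i, hx_pos i]
    have hsumsq_erase : ∀ j, ∑ k ∈ Finset.univ.erase j, x k^2 = 1 - x j^2 := fun j => by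
      rw [Finset.sum_erase_eq_sub (Finset.mem_univ j), hx_norm]
    have hNsub : ∀ j, G.neighborFinset j ⊆ Finset.univ.erase j := by
      intro j k hk
      rw [SimpleGraph.mem_neighborFinset] at hk
      exact Finset.mem_erase.mpr ⟨hk.ne', Finset.mem_univ k⟩
    have hcarderase : (Finset.univ.erase i).card = n - 1 := by
      rw [Finset.card_erase_of_mem (Finset.mem_univ i), Finset.card_univ, Fintype.card_fin]
    have hT_le : ∀ j, ∑ k ∈ G.neighborFinset j, x k^2 ≤ 1 - x j^2 := fun j => by
      rw [← hsumsq_erase j]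
      exact Finset.sum_le_sum_of_subset_of_nonneg (hNsub j) (fun k _ _ => sq_nonneg (x k))
    have hCSle : ∀ j, (∑ k ∈ G.neighborFinset j, x k)^2
        ≤ (G.degree j : ℝ) * ∑ k ∈ G.neighborFinset j, x k^2 := fun j => by
      rw [← SimpleGraph.card_neighborFinset_eq_degree]
      exact sq_sum_le_card_mul_sum_sq
    have hmain : ∀ j, ρ^2 * x j^2 ≤ (G.degree j : ℝ) * (1 - x j^2) := by
      intro j
      have h1 : ρ^2 * x j^2 = (∑ k ∈ G.neighborFinset j, x k)^2 := by rw [hEig j]; ring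
      have h2 := hCSle j
      have h3 := mul_le_mul_of_nonneg_left (hT_le j) (by positivity : (0:ℝ) ≤ (G.degree j : ℝ))
      linarith
    have hBsq : ∀ d : ℝ, 0 < d → (1/Real.sqrt (1+ρ^2/d))^2 = d/(d+ρ^2) := by
      intro d hd
      rw [div_pow, one_pow, Real.sq_sqrt (by positivity)]
      rw [show 1 + ρ^2/d = (d + ρ^2)/d by field_simp]
      rw [one_div_div]
    have hBpos : ∀ d : ℝ, 0 < d → 0 < 1/Real.sqrt (1+ρ^2/d) := by
      intro d hd; positivity
    have hub : ∀ j, x j ≤ 1/Real.sqrt (1 + ρ^2/(G.degree j : ℝ)) := by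
      intro j
      have hd : (0:ℝ) < (G.degree j : ℝ) := by exact_mod_cast hdegpos j
      have hsq : x j^2 ≤ (G.degree j : ℝ)/((G.degree j : ℝ)+ρ^2) := by
        rw [le_div_iff₀ (by positivity)]
        nlinarith [hmain j]
      nlinarith [hBsq _ hd, hBpos _ hd, hx_pos j, hsq]
    have hBmono : ∀ d₁ d₂ : ℝ, 0 < d₁ → d₁ ≤ d₂ →
        1/Real.sqrt (1+ρ^2/d₁) ≤ 1/Real.sqrt (1+ρ^2/d₂) := by
      intro d₁ d₂ h1 h2
      have h2' : 0 < d₂ := lt_of_lt_of_le h1 h2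
      apply one_div_le_one_div_of_le (Real.sqrt_pos.mpr (by positivity))
      apply Real.sqrt_le_sqrt
      have : ρ^2/d₂ ≤ ρ^2/d₁ := by
        rw [div_le_div_iff₀ h2' h1]
        nlinarith [sq_nonneg ρ]
      linarith
    constructor
    · -- forward direction
      intro h
      have hd : (0:ℝ) < (G.degree i : ℝ) := by exact_mod_cast hdegpos i
      set D := (G.degree i : ℝ) with hD
      have hsq : x i^2 = D/(D+ρ^2) := by rw [h, hBsq D hd]
      have heq1 : ρ^2 * x i^2 = D * (1 - x i^2) := by
        have hDν : x i^2 * (D + ρ^2) = D := by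
          rw [hsq]; field_simp
        nlinarith
      have hA : (∑ k ∈ G.neighborFinset i, x k)^2 = ρ^2 * x i^2 := by rw [hEig i]; ring
      have hT : ∑ k ∈ G.neighborFinset i, x k^2 = 1 - x i^2 := by
        have h2 := hCSle i
        have h3 := hT_le i
        nlinarith
      have hCSeq : (∑ k ∈ G.neighborFinset i, x k)^2
          = D * ∑ k ∈ G.neighborFinset i, x k^2 := by
        rw [hT, hA, heq1]
      have hNfull : G.neighborFinset i = Finset.univ.erase i := by
        have hzero : ∑ k ∈ Finset.univ.erase i \ G.neighborFinset i, x k^2 = 0 := by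
          have := Finset.sum_sdiff (f := fun k => x k^2) (hNsub i)
          rw [hT, hsumsq_erase i] at this
          linarith
        have hempty : Finset.univ.erase i \ G.neighborFinset i = ∅ := by
          rw [Finset.eq_empty_iff_forall_notMem]
          intro k hk
          have := (Finset.sum_eq_zero_iff_of_nonneg
            (fun k _ => sq_nonneg (x k))).mp hzero k hk
          nlinarith [hx_pos k]
        exact Finset.Subset.antisymm (hNsub i) (Finset.sdiff_eq_empty_iff_subset.mp hempty)
      have hdeg : G.degree i = n - 1 := by
        rw [← SimpleGraph.card_neighborFinset_eq_degree, hNfull, hcarderase]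
      have hconst : ∀ j ∈ Finset.univ.erase i, ∀ k ∈ Finset.univ.erase i, x j = x k := by
        apply sumsq_eq
        rw [← hNfull, SimpleGraph.card_neighborFinset_eq_degree]
        exact hCSeq
      refine ⟨?_, hdeg, ?_⟩
      · intro j
        calc x j ≤ 1/Real.sqrt (1 + ρ^2/(G.degree j : ℝ)) := hub j
          _ ≤ 1/Real.sqrt (1 + ρ^2/D) := by
              apply hBmono _ _ (by exact_mod_cast hdegpos j)
              rw [hD, hdeg]
              have := G.degree_lt_card_verts j
              rw [Fintype.card_fin] at this
              exact_mod_cast Nat.le_sub_one_of_lt this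
          _ = x i := h.symm
      · obtain ⟨j₀, hj₀⟩ : (Finset.univ.erase i).Nonempty :=
          Finset.card_pos.mp (by rw [hcarderase]; omega)
        have ht : ∀ j ∈ Finset.univ.erase i, x j = x j₀ := fun j hj => hconst j hj j₀ hj₀
        have hAdj : ∀ j, j ≠ i → G.Adj i j := by
          intro j hj
          exact (SimpleGraph.mem_neighborFinset G i j).mp
            (hNfull ▸ Finset.mem_erase.mpr ⟨hj, Finset.mem_univ j⟩)
        have hcount : ∀ j, j ≠ i →
            (((G.neighborFinset j).erase i).card : ℝ) * x j₀ = ρ * x j₀ - x i := by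
          intro j hj
          have hiN : i ∈ G.neighborFinset j :=
            (SimpleGraph.mem_neighborFinset G j i).mpr (hAdj j hj).symm
          have h2 : ∑ k ∈ (G.neighborFinset j).erase i, x k = ρ * x j - x i := by
            rw [Finset.sum_erase_eq_sub hiN, hEig j]
          have h3 : ∀ k ∈ (G.neighborFinset j).erase i, x k = x j₀ := by
            intro k hk
            exact ht k (Finset.mem_erase.mpr ⟨(Finset.mem_erase.mp hk).1, Finset.mem_univ k⟩)
          rw [Finset.sum_congr rfl h3, Finset.sum_const, nsmul_eq_mul] at h2
          rw [ht j (Finset.mem_erase.mpr ⟨hj, Finset.mem_univ j⟩)] at h2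
          exact h2
        refine ⟨((G.neighborFinset j₀).erase i).card, ?_⟩
        intro v
        rw [bridge]
        have hv : (v : Fin n) ≠ i := v.2
        have e1 := hcount _ hv
        have e2 := hcount j₀ (Finset.mem_erase.mp hj₀).1
        have ht0 : 0 < x j₀ := hx_pos j₀
        have : ((((G.neighborFinset (v : Fin n)).erase i).card : ℝ))
            = (((G.neighborFinset j₀).erase i).card : ℝ) := by
          apply mul_right_cancel₀ (ne_of_gt ht0)
          rw [e1, e2]
        exact_mod_cast this
    · -- backward direction
      rintro ⟨hmax, hdeg, d, hreg⟩
      have hNfull : G.neighborFinset i = Finset.univ.erase i := by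
        apply Finset.eq_of_subset_of_card_le (hNsub i)
        rw [hcarderase, SimpleGraph.card_neighborFinset_eq_degree, hdeg]
      have hAdj : ∀ j, j ≠ i → G.Adj i j := by
        intro j hj
        exact (SimpleGraph.mem_neighborFinset G i j).mp
          (hNfull ▸ Finset.mem_erase.mpr ⟨hj, Finset.mem_univ j⟩)
      have hcard : ∀ j, j ≠ i → ((G.neighborFinset j).erase i).card = d := by
        intro j hj
        have := hreg ⟨j, Set.mem_compl_singleton_iff.mpr hj⟩
        rwa [bridge] at this
      have hne : (Finset.univ.erase i).Nonempty :=
        Finset.card_pos.mp (by rw [hcarderase]; omega)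
      obtain ⟨m, hm, hmle⟩ := Finset.exists_min_image _ x hne
      obtain ⟨M, hM, hMle⟩ := Finset.exists_max_image _ x hne
      have hm' : m ≠ i := (Finset.mem_erase.mp hm).1
      have hM' : M ≠ i := (Finset.mem_erase.mp hM).1
      have hsum : ∀ j, j ≠ i →
          ρ * x j = x i + ∑ k ∈ (G.neighborFinset j).erase i, x k := by
        intro j hj
        have hiN : i ∈ G.neighborFinset j :=
          (SimpleGraph.mem_neighborFinset G j i).mpr (hAdj j hj).symm
        rw [← hEig j, Finset.sum_erase_eq_sub hiN]
        ring
      have subErase : ∀ j, (G.neighborFinset j).erase i ⊆ Finset.univ.erase i := by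
        intro j k hk
        exact Finset.mem_erase.mpr ⟨(Finset.mem_erase.mp hk).1, Finset.mem_univ k⟩
      have hlb : x i + (d:ℝ) * x m ≤ ρ * x m := by
        rw [hsum m hm']
        have h1 : ((G.neighborFinset m).erase i).card • x m
            ≤ ∑ k ∈ (G.neighborFinset m).erase i, x k :=
          Finset.card_nsmul_le_sum _ _ _ (fun k hk => hmle k (subErase m hk))
        rw [hcard m hm', nsmul_eq_mul] at h1
        linarith
      have hub2 : ρ * x M ≤ x i + (d:ℝ) * x M := by
        rw [hsum M hM']
        have h1 : ∑ k ∈ (G.neighborFinset M).erase i, x k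
            ≤ ((G.neighborFinset M).erase i).card • x M :=
          Finset.sum_le_card_nsmul _ _ _ (fun k hk => hMle k (subErase M hk))
        rw [hcard M hM', nsmul_eq_mul] at h1
        linarith
      have hρd : (d:ℝ) < ρ := by nlinarith [hx_pos m, hx_pos i]
      have hMm : x M ≤ x m := by nlinarith [hx_pos i]
      have hconst : ∀ j ∈ Finset.univ.erase i, x j = x m := fun j hj =>
        le_antisymm (le_trans (hMle j hj) hMm) (hmle j hj)
      have hNr : ((n - 1 : ℕ) : ℝ) = (n : ℝ) - 1 := by
        rw [Nat.cast_sub (by omega), Nat.cast_one]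
      have hsumN : ρ * x i = ((n:ℝ)-1) * x m := by
        rw [← hEig i, hNfull, Finset.sum_congr rfl hconst, Finset.sum_const,
          nsmul_eq_mul, hcarderase, hNr]
      have hnorm2 : x i^2 + ((n:ℝ)-1)*(x m)^2 = 1 := by
        have h1 := hsumsq_erase i
        rw [Finset.sum_congr rfl (fun j hj => by rw [hconst j hj]), Finset.sum_const,
          nsmul_eq_mul, hcarderase, hNr] at h1
        linarith
      rw [hdeg, hNr]
      have hN0 : (0:ℝ) < (n:ℝ) - 1 := by
        have : (2:ℝ) ≤ (n:ℝ) := by exact_mod_cast hn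
        linarith
      have hxsq : x i^2 = ((n:ℝ)-1)/(((n:ℝ)-1)+ρ^2) := by
        rw [eq_div_iff (by positivity)]
        have h1 : (ρ * x i)^2 = (((n:ℝ)-1))^2*(x m)^2 := by rw [hsumN]; ring
        have h2 : ((n:ℝ)-1) * (x i^2 + ((n:ℝ)-1)*(x m)^2) = ((n:ℝ)-1) * 1 := by
          rw [hnorm2]
        linear_combination h1 + h2
      have hB2 := hBsq _ hN0
      have hBp := hBpos _ hN0
      have hxi : x i = Real.sqrt (x i^2) := (Real.sqrt_sq (hx_pos i).le).symm
      rw [hxi, hxsq, ← hB2, Real.sqrt_sq hBp.le]
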